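/- Let m, n ∈ ℕ, let g be a generator of a cyclic subgroup ⟨g⟩ of ℤ_n of order κ, and let N < m be a natural number satisfying m − 2N ≡ g (mod n). If h : E(C⃗_m) → {C⃗_n, C⃖_n} assigns C⃖_n to exactly N arcs of C⃗_m, then C⃗_m ⊗_h {C⃗_n, C⃖_n} consists of exactly n/κ disjoint copies of the strongly oriented cycle C⃗_{mκ}. In particular, if gcd(g,n) = 1 then C⃗_m ⊗_h {C⃗_n, C⃖_n} ≅ C⃗_{mn}. -/

import Mathlib

open Finset

/-- The arc set of the product `D ⊗_h Γ`, where `D` has arc set `A` and `h` assigns to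
each arc of `D` a digraph on a vertex set contained in `ℤ`:
`((a,i),(b,j))` is an arc iff `(a,b) ∈ A` and `(i,j) ∈ h (a,b)`. -/
def prodArcs {α : Type*} [DecidableEq α] (A : Finset (α × α))
    (h : α × α → Finset (ℤ × ℤ)) : Finset ((α × ℤ) × (α × ℤ)) :=
  A.biUnion fun ab => (h ab).image fun ij => ((ab.1, ij.1), (ab.2, ij.2))

/-- Isomorphism of digraphs given by vertex sets and arc sets. -/
def DigraphIso {β γ : Type*} [DecidableEq β] [DecidableEq γ]
    (V1 : Finset β) (A1 : Finset (β × β)) (V2 : Finset γ) (A2 : Finset (γ × γ)) : Prop :=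
  ∃ φ : β → γ, Set.InjOn φ ↑V1 ∧ V1.image φ = V2 ∧ A1.image (Prod.map φ φ) = A2

/-- The arc set of the strongly oriented cycle `C⃗_n` on the vertex set `[1,n] ⊆ ℤ`:
arcs `i → i+1` (and `n → 1`). -/
noncomputable def forwardCycle (n : ℕ) : Finset (ℤ × ℤ) :=
  (Finset.Icc (1 : ℤ) (n : ℤ)).image fun i => (i, if i = (n : ℤ) then 1 else i + 1)

/-- The arc set of the reverse strong orientation `C⃖_n` of the cycle `C_n` on the
vertex set `[1,n] ⊆ ℤ`. -/
noncomputable def backwardCycle (n : ℕ) : Finset (ℤ × ℤ) :=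
  (Finset.Icc (1 : ℤ) (n : ℤ)).image fun i => (if i = (n : ℤ) then 1 else i + 1, i)

/-- The arc set of the disjoint union of `c` copies of the strongly oriented cycle
`C⃗_L`, on the vertex set `[1,c] × [1,L] ⊆ ℤ × ℤ`. -/
noncomputable def unionCycles (c L : ℕ) : Finset ((ℤ × ℤ) × (ℤ × ℤ)) :=
  ((Finset.Icc (1 : ℤ) (c : ℤ)) ×ˢ (Finset.Icc (1 : ℤ) (L : ℤ))).image
    fun x => (x, (x.1, if x.2 = (L : ℤ) then 1 else x.2 + 1))

def nxt (m : ℕ) (a : ℤ) : ℤ := if a = (m : ℤ) then 1 else a + 1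


lemma mem_forwardCycle {m : ℕ} {p : ℤ × ℤ} :
    p ∈ forwardCycle m ↔ p.1 ∈ Finset.Icc (1:ℤ) (m:ℤ) ∧ p.2 = nxt m p.1 := by
  simp only [forwardCycle, mem_image, nxt]
  constructor
  · rintro ⟨i, hi, rfl⟩; exact ⟨hi, rfl⟩
  · rintro ⟨h1, h2⟩; exact ⟨p.1, h1, by rw [← h2]⟩

lemma mem_backwardCycle {n : ℕ} {p : ℤ × ℤ} :
    p ∈ backwardCycle n ↔ p.2 ∈ Finset.Icc (1:ℤ) (n:ℤ) ∧ p.1 = nxt n p.2 := by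
  simp only [backwardCycle, mem_image, nxt]
  constructor
  · rintro ⟨i, hi, rfl⟩; exact ⟨hi, rfl⟩
  · rintro ⟨h1, h2⟩; exact ⟨p.2, h1, by rw [← h2]⟩

lemma nxt_mem {m : ℕ} {a : ℤ} (ha : a ∈ Finset.Icc (1:ℤ) (m:ℤ)) :
    nxt m a ∈ Finset.Icc (1:ℤ) (m:ℤ) := by
  simp only [mem_Icc] at *
  unfold nxt; split <;> omega

lemma forward_ne_backward {n : ℕ} (hn : 3 ≤ n) : forwardCycle n ≠ backwardCycle n := by
  intro hEq
  have h1 : ((1:ℤ), (2:ℤ)) ∈ forwardCycle n := by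
    rw [mem_forwardCycle]
    constructor
    · simp only [mem_Icc]; omega
    · show (2:ℤ) = if (1:ℤ) = (n:ℤ) then 1 else 1 + 1
      rw [if_neg (by omega)]; norm_num
  rw [hEq, mem_backwardCycle] at h1
  simp only [mem_Icc, nxt] at h1
  rcases h1 with ⟨h2, h3⟩
  split at h3 <;> omega

lemma card_forwardCycle (n : ℕ) : (forwardCycle n).card = n := by
  rw [forwardCycle, Finset.card_image_of_injective _ (fun a b hab => (Prod.mk.injEq _ _ _ _ ▸ hab).1)]
  simp

lemma card_backwardCycle (n : ℕ) : (backwardCycle n).card = n := by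
  rw [backwardCycle, Finset.card_image_of_injOn (fun a _ b _ hab => (Prod.mk.injEq _ _ _ _ ▸ hab).2)]
  simp

noncomputable section
variable {n : ℕ}

/-- canonical representative of the coset of `x` modulo `zmultiples g`. -/
def repC (g x : ZMod n) : ZMod n :=
  ((QuotientAddGroup.mk x : ZMod n ⧸ AddSubgroup.zmultiples g)).out

lemma mk_repC (g x : ZMod n) :
    (QuotientAddGroup.mk (s := AddSubgroup.zmultiples g) (repC g x)) = QuotientAddGroup.mk x :=
  QuotientAddGroup.out_eq' _

lemma sub_repC_mem (g x : ZMod n) : ∃ k : ℤ, k • g = x - repC g x := by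
  have : -(repC g x) + x ∈ AddSubgroup.zmultiples g := (QuotientAddGroup.eq).mp (mk_repC g x)
  rw [neg_add_eq_sub] at this
  exact AddSubgroup.mem_zmultiples_iff.mp this

/-- discrete log of `x - repC g x` base `g`, normalized to `[0, addOrderOf g)`. -/
def dl (g x : ZMod n) : ℤ := (sub_repC_mem g x).choose % (addOrderOf g : ℤ)

lemma zsmul_emod (g : ZMod n) (k : ℤ) : (k % (addOrderOf g : ℤ)) • g = k • g := by
  have h0 : ((addOrderOf g : ℤ)) • g = 0 := by
    rw [natCast_zsmul]; exact addOrderOf_nsmul_eq_zero g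
  have : k % (addOrderOf g : ℤ) = k - (addOrderOf g : ℤ) * (k / (addOrderOf g : ℤ)) :=
    Int.emod_def k _
  rw [this, sub_zsmul, mul_comm, mul_zsmul, h0, smul_zero]; simp

lemma dl_spec (g x : ZMod n) : (dl g x) • g = x - repC g x := by
  rw [dl, zsmul_emod]; exact (sub_repC_mem g x).choose_spec

lemma dl_nonneg (g x : ZMod n) (hg : addOrderOf g ≠ 0) : 0 ≤ dl g x :=
  Int.emod_nonneg _ (by exact_mod_cast hg)

lemma dl_lt (g x : ZMod n) (hg : addOrderOf g ≠ 0) : dl g x < (addOrderOf g : ℤ) :=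
  Int.emod_lt_of_pos _ (by exact_mod_cast Nat.pos_of_ne_zero hg)

lemma dl_unique (g x : ZMod n) (hg : addOrderOf g ≠ 0) {k : ℤ}
    (hk0 : 0 ≤ k) (hk1 : k < (addOrderOf g : ℤ)) (hspec : k • g = x - repC g x) :
    k = dl g x := by
  have hz : (k - dl g x) • g = 0 := by
    rw [sub_zsmul, hspec, dl_spec]; abel
  have hdvd : ((addOrderOf g : ℤ)) ∣ (k - dl g x) :=
    addOrderOf_dvd_iff_zsmul_eq_zero.mpr hz
  obtain ⟨c, hc⟩ := hdvd
  have h1 := dl_nonneg g x hg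
  have h2 := dl_lt g x hg
  rcases lt_trichotomy c 0 with hcc | hcc | hcc
  · have hb := mul_le_mul_of_nonneg_left (show c ≤ -1 by omega)
      (show (0:ℤ) ≤ (addOrderOf g : ℤ) by positivity)
    linarith
  · rw [hcc, mul_zero] at hc; omega
  · have hb := mul_le_mul_of_nonneg_left (show (1:ℤ) ≤ c by omega)
      (show (0:ℤ) ≤ (addOrderOf g : ℤ) by positivity)
    linarith

lemma repC_add (g x : ZMod n) : repC g (x + g) = repC g x := by
  unfold repC
  congr 1
  rw [QuotientAddGroup.eq]
  have hg : -(x + g) + x = -g := by abel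
  rw [hg]
  exact AddSubgroup.neg_mem _ (AddSubgroup.mem_zmultiples g)

lemma dl_add (g x : ZMod n) (hg : addOrderOf g ≠ 0) :
    dl g (x + g) = (dl g x + 1) % (addOrderOf g : ℤ) := by
  refine (dl_unique g (x + g) hg ?_ ?_ ?_).symm
  · exact Int.emod_nonneg _ (by exact_mod_cast hg)
  · exact Int.emod_lt_of_pos _ (by omega)
  · rw [zsmul_emod, add_zsmul, dl_spec, one_zsmul, repC_add]
    abel

lemma card_quot (g : ZMod n) [NeZero n] {κ : ℕ} (hκ : addOrderOf g = κ) :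
    Nat.card (ZMod n ⧸ AddSubgroup.zmultiples g) = n / κ := by
  have h1 : (AddSubgroup.zmultiples g).index * κ = n := by
    have := AddSubgroup.index_mul_card (AddSubgroup.zmultiples g)
    rwa [Nat.card_zmultiples, hκ, Nat.card_zmod] at this
  have hκ0 : κ ≠ 0 := by
    rintro rfl
    have hp := addOrderOf_pos g
    omega
  have : Nat.card (ZMod n ⧸ AddSubgroup.zmultiples g) = (AddSubgroup.zmultiples g).index := rfl
  rw [this]; exact (Nat.div_eq_of_eq_mul_left (by omega) h1.symm).symm

example (g : ZMod n) [NeZero n] : Finite (ZMod n ⧸ AddSubgroup.zmultiples g) := by infer_instance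
end

/-- sign of arc `a → nxt a` of `C⃗_m` under `h`. -/
noncomputable def eps (n m : ℕ) (h : ℤ × ℤ → Finset (ℤ × ℤ)) (a : ℤ) : ℤ :=
  if h (a, nxt m a) = backwardCycle n then -1 else 1

/-- partial sums of the signs. -/
noncomputable def psum (n m : ℕ) (h : ℤ × ℤ → Finset (ℤ × ℤ)) (a : ℤ) : ℤ :=
  ∑ b ∈ Finset.Ico (1 : ℤ) a, eps n m h b

lemma psum_one (n m : ℕ) (h : ℤ × ℤ → Finset (ℤ × ℤ)) : psum n m h 1 = 0 := by
  simp [psum]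

lemma psum_succ (n m : ℕ) (h : ℤ × ℤ → Finset (ℤ × ℤ)) {a : ℤ} (ha : 1 ≤ a) :
    psum n m h (a + 1) = psum n m h a + eps n m h a := by
  unfold psum
  have h1 : Finset.Ico (1:ℤ) (a+1) = Finset.Icc (1:ℤ) a := rfl
  rw [h1, ← Finset.Ico_insert_right ha, Finset.sum_insert (by simp)]
  ring

lemma sum_eps (n m N : ℕ) (h : ℤ × ℤ → Finset (ℤ × ℤ))
    (hcount : ((forwardCycle m).filter fun a => h a = backwardCycle n).card = N) :
    psum n m h ((m : ℤ) + 1) = (m : ℤ) - 2 * N := by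
  have hinj : Set.InjOn (fun i : ℤ => (i, if i = (m:ℤ) then 1 else i + 1)) ↑(Finset.Icc (1:ℤ) (m:ℤ)) :=
    fun a _ b _ hab => (Prod.mk.injEq _ _ _ _ ▸ hab).1
  have hfilt : ((Finset.Icc (1:ℤ) (m:ℤ)).filter fun a => h (a, nxt m a) = backwardCycle n).card = N := by
    rw [← hcount, forwardCycle, Finset.filter_image]
    rw [Finset.card_image_of_injOn (Set.InjOn.mono (Finset.coe_subset.mpr (Finset.filter_subset _ _)) hinj)]
    rfl
  unfold psum
  have h1 : Finset.Ico (1:ℤ) ((m:ℤ)+1) = Finset.Icc (1:ℤ) (m:ℤ) := rfl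
  rw [h1]
  have hsplit : ∀ a : ℤ, eps n m h a =
      1 - 2 * (if h (a, nxt m a) = backwardCycle n then (1:ℤ) else 0) := by
    intro a; unfold eps; split <;> ring
  rw [Finset.sum_congr rfl (fun a _ => hsplit a)]
  rw [Finset.sum_sub_distrib, Finset.sum_const, ← Finset.mul_sum, ← Finset.sum_filter]
  rw [Finset.sum_const, hfilt]
  simp only [nsmul_eq_mul, mul_one, smul_eq_mul]
  rw [Int.card_Icc]
  simp

lemma nxt_cast (n : ℕ) (i : ℤ) : ((nxt n i : ℤ) : ZMod n) = (i : ZMod n) + 1 := by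
  unfold nxt
  split
  · rename_i hi
    subst hi
    have : ((n : ℤ) : ZMod n) = 0 := by push_cast; simp
    rw [this]; push_cast; ring
  · push_cast; ring

lemma mem_prodArcs {m : ℕ} {h : ℤ × ℤ → Finset (ℤ × ℤ)} {u v : ℤ × ℤ} :
    (u, v) ∈ prodArcs (forwardCycle m) h ↔
      (u.1, v.1) ∈ forwardCycle m ∧ (u.2, v.2) ∈ h (u.1, v.1) := by
  unfold prodArcs
  rw [Finset.mem_biUnion]
  constructor
  · rintro ⟨ab, hab, hmem⟩
    rw [Finset.mem_image] at hmem
    obtain ⟨ij, hij, heq⟩ := hmem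
    obtain ⟨h1, h2⟩ := Prod.mk.injEq _ _ _ _ ▸ heq
    obtain ⟨h11, h12⟩ := Prod.mk.injEq _ _ _ _ ▸ h1
    obtain ⟨h21, h22⟩ := Prod.mk.injEq _ _ _ _ ▸ h2
    have hab' : ab = (u.1, v.1) := by rw [Prod.ext_iff]; exact ⟨h11, h21⟩
    subst hab'
    constructor
    · exact hab
    · have : ij = (u.2, v.2) := by rw [Prod.ext_iff]; exact ⟨h12, h22⟩
      rwa [this] at hij
  · rintro ⟨h1, h2⟩
    exact ⟨(u.1, v.1), h1, Finset.mem_image.mpr ⟨(u.2, v.2), h2, by simp⟩⟩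

lemma arc_props {n m : ℕ} (hn : 3 ≤ n) {h : ℤ × ℤ → Finset (ℤ × ℤ)}
    (hrange : ∀ a ∈ forwardCycle m, h a = forwardCycle n ∨ h a = backwardCycle n)
    {u v : ℤ × ℤ} (harc : (u, v) ∈ prodArcs (forwardCycle m) h) :
    u.1 ∈ Finset.Icc (1:ℤ) (m:ℤ) ∧ v.1 = nxt m u.1 ∧ u.2 ∈ Finset.Icc (1:ℤ) (n:ℤ) ∧
      v.2 ∈ Finset.Icc (1:ℤ) (n:ℤ) ∧ ((v.2 : ZMod n)) = (u.2 : ZMod n) + ((eps n m h u.1 : ℤ) : ZMod n) := by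
  rw [mem_prodArcs] at harc
  obtain ⟨h1, h2⟩ := harc
  rw [mem_forwardCycle] at h1
  obtain ⟨ha, hb⟩ := h1
  refine ⟨ha, hb, ?_⟩
  rcases hrange (u.1, v.1) (mem_forwardCycle.mpr ⟨ha, hb⟩) with hf | hbk
  · -- forward arc: eps = 1
    have heps : eps n m h u.1 = 1 := by
      unfold eps
      rw [if_neg]
      rw [← hb, hf]
      exact forward_ne_backward hn
    rw [hf, mem_forwardCycle] at h2
    obtain ⟨hi, hj⟩ := h2
    refine ⟨hi, hj ▸ nxt_mem hi, ?_⟩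
    rw [hj, nxt_cast, heps]
    push_cast; ring
  · -- backward arc: eps = -1
    have heps : eps n m h u.1 = -1 := by
      unfold eps
      rw [if_pos]
      rw [← hb, hbk]
    rw [hbk, mem_backwardCycle] at h2
    obtain ⟨hj, hi⟩ := h2
    replace hj : v.2 ∈ Finset.Icc (1:ℤ) (n:ℤ) := hj
    replace hi : u.2 = nxt n v.2 := hi
    refine ⟨hi ▸ nxt_mem hj, hj, ?_⟩
    have := congrArg (fun z : ℤ => (z : ZMod n)) hi
    rw [nxt_cast] at this
    rw [heps, this]
    push_cast; ring

lemma card_prodArcs {n m : ℕ} {h : ℤ × ℤ → Finset (ℤ × ℤ)}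
    (hrange : ∀ a ∈ forwardCycle m, h a = forwardCycle n ∨ h a = backwardCycle n) :
    (prodArcs (forwardCycle m) h).card = m * n := by
  unfold prodArcs
  rw [Finset.card_biUnion]
  · have : ∀ ab ∈ forwardCycle m,
        ((h ab).image fun ij => ((ab.1, ij.1), (ab.2, ij.2))).card = n := by
      intro ab hab
      rw [Finset.card_image_of_injOn]
      · rcases hrange ab hab with hf | hb
        · rw [hf, card_forwardCycle]
        · rw [hb, card_backwardCycle]
      · intro x _ y _ hxy
        simp only [Prod.mk.injEq] at hxy
        exact Prod.ext hxy.1.2 hxy.2.2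
    rw [Finset.sum_congr rfl this, Finset.sum_const, card_forwardCycle, smul_eq_mul]
  · intro x hx y hy hxy
    rw [Function.onFun, Finset.disjoint_left]
    intro p hp hq
    rw [Finset.mem_image] at hp hq
    obtain ⟨ij, _, rfl⟩ := hp
    obtain ⟨ij', _, heq⟩ := hq
    apply hxy
    simp only [Prod.mk.injEq] at heq
    exact Prod.ext heq.1.1.symm heq.2.1.symm

lemma card_unionCycles (c L : ℕ) : (unionCycles c L).card = c * L := by
  unfold unionCycles
  rw [Finset.card_image_of_injOn (fun x _ y _ hxy => (Prod.mk.injEq _ _ _ _ ▸ hxy).1)]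
  rw [Finset.card_product]
  simp [Int.card_Icc]

lemma mk_add_g {n : ℕ} (g x : ZMod n) :
    (QuotientAddGroup.mk (s := AddSubgroup.zmultiples g) (x + g)) = QuotientAddGroup.mk x := by
  rw [QuotientAddGroup.eq]
  have hg : -(x + g) + x = -g := by abel
  rw [hg]
  exact AddSubgroup.neg_mem _ (AddSubgroup.mem_zmultiples g)

lemma intCast_Icc_inj {n : ℕ} (hn : 0 < n) {i i' : ℤ} (hi : i ∈ Finset.Icc (1:ℤ) (n:ℤ))
    (hi' : i' ∈ Finset.Icc (1:ℤ) (n:ℤ)) (hii : (i : ZMod n) = (i' : ZMod n)) : i = i' := by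
  rw [Finset.mem_Icc] at hi hi'
  have hd : (n : ℤ) ∣ i' - i := (ZMod.intCast_eq_intCast_iff _ _ _).mp hii |>.dvd
  obtain ⟨cc, hcc⟩ := hd
  rcases lt_trichotomy cc 0 with hc0 | hc0 | hc0
  · have := mul_le_mul_of_nonneg_left (show cc ≤ -1 by omega) (show (0:ℤ) ≤ n by positivity)
    linarith
  · rw [hc0, mul_zero] at hcc; omega
  · have := mul_le_mul_of_nonneg_left (show (1:ℤ) ≤ cc by omega) (show (0:ℤ) ≤ n by positivity)
    linarith

/-- the coset part of a vertex of the product digraph. -/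
noncomputable def qMap (n m : ℕ) (h : ℤ × ℤ → Finset (ℤ × ℤ)) (p : ℤ × ℤ) : ZMod n :=
  (p.2 : ZMod n) - ((psum n m h p.1 : ℤ) : ZMod n)

/-- the isomorphism from the product digraph to the disjoint cycles. -/
noncomputable def phiMap (n m c : ℕ) (h : ℤ × ℤ → Finset (ℤ × ℤ)) (g : ZMod n)
    (e : ZMod n ⧸ AddSubgroup.zmultiples g ≃ Fin c) (p : ℤ × ℤ) : ℤ × ℤ :=
  (((e (QuotientAddGroup.mk (qMap n m h p))).val : ℤ) + 1,
   (p.1 - 1) + (m : ℤ) * dl g (qMap n m h p) + 1)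

section Phi
variable {n m c κ N : ℕ} [NeZero n] {g : ZMod n}
  {h : ℤ × ℤ → Finset (ℤ × ℤ)}
  (e : ZMod n ⧸ AddSubgroup.zmultiples g ≃ Fin c)

lemma phi_mem (hκ : addOrderOf g = κ) (hκpos : 0 < κ) (hm : 0 < m)
    {p : ℤ × ℤ} (hp : p ∈ Finset.Icc (1:ℤ) (m:ℤ) ×ˢ Finset.Icc (1:ℤ) (n:ℤ)) :
    phiMap n m c h g e p ∈ Finset.Icc (1:ℤ) (c:ℤ) ×ˢ Finset.Icc (1:ℤ) ((m*κ : ℕ):ℤ) := by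
  rw [Finset.mem_product, Finset.mem_Icc, Finset.mem_Icc] at hp ⊢
  have hg0 : addOrderOf g ≠ 0 := by omega
  have hval : ((e (QuotientAddGroup.mk (qMap n m h p))).val : ℤ) < c := by
    exact_mod_cast (e _).isLt
  have h0 := dl_nonneg g (qMap n m h p) hg0
  have h1 := dl_lt g (qMap n m h p) hg0
  rw [hκ] at h1
  have hb := mul_le_mul_of_nonneg_left (show dl g (qMap n m h p) ≤ (κ:ℤ) - 1 by omega)
    (show (0:ℤ) ≤ (m:ℤ) by positivity)
  unfold phiMap
  dsimp only
  push_cast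
  have hnn : (0:ℤ) ≤ ((e (QuotientAddGroup.mk (qMap n m h p))).val : ℤ) := Int.natCast_nonneg _
  have hmdl : (0:ℤ) ≤ (m:ℤ) * dl g (qMap n m h p) := mul_nonneg (Int.natCast_nonneg _) h0
  refine ⟨⟨by omega, by omega⟩, ?_, ?_⟩
  · linarith [hp.1.1]
  · linarith [hp.1.2]

set_option maxHeartbeats 2000000 in
lemma phi_injOn (hκ : addOrderOf g = κ) (hκpos : 0 < κ) (hn0 : 0 < n) :
    Set.InjOn (phiMap n m c h g e)
      ↑(Finset.Icc (1:ℤ) (m:ℤ) ×ˢ Finset.Icc (1:ℤ) (n:ℤ)) := by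
  intro p hp p' hp' heq
  simp only [Finset.coe_product, Set.mem_prod, Finset.mem_coe, Finset.mem_Icc] at hp hp'
  have hg0 : addOrderOf g ≠ 0 := by omega
  unfold phiMap at heq
  rw [Prod.ext_iff] at heq
  obtain ⟨h1, h2⟩ := heq
  simp only at h1 h2
  -- from first components: same coset
  have hmk : (QuotientAddGroup.mk (qMap n m h p) : ZMod n ⧸ AddSubgroup.zmultiples g)
      = QuotientAddGroup.mk (qMap n m h p') := by
    apply e.injective
    apply Fin.ext
    have hv : ((e (QuotientAddGroup.mk (qMap n m h p))).val : ℤ)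
        = ((e (QuotientAddGroup.mk (qMap n m h p'))).val : ℤ) := by omega
    exact Nat.cast_injective hv
  -- from second components: same a and same dl
  have hdl0 := dl_nonneg g (qMap n m h p) hg0
  have hdl1 := dl_lt g (qMap n m h p) hg0
  have hdl0' := dl_nonneg g (qMap n m h p') hg0
  have hdl1' := dl_lt g (qMap n m h p') hg0
  rw [hκ] at hdl1 hdl1'
  have key : p.1 = p'.1 ∧ dl g (qMap n m h p) = dl g (qMap n m h p') := by
    have hd : p.1 - p'.1 = (m:ℤ) * (dl g (qMap n m h p') - dl g (qMap n m h p)) := by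
      ring_nf; ring_nf at h2; linarith
    rcases lt_trichotomy (dl g (qMap n m h p') - dl g (qMap n m h p)) 0 with hc0 | hc0 | hc0
    · have := mul_le_mul_of_nonneg_left
        (show dl g (qMap n m h p') - dl g (qMap n m h p) ≤ -1 by omega)
        (show (0:ℤ) ≤ (m:ℤ) by positivity)
      constructor <;> nlinarith [hp.1.1, hp.1.2, hp'.1.1, hp'.1.2]
    · rw [hc0, mul_zero] at hd
      constructor <;> omega
    · have := mul_le_mul_of_nonneg_left
        (show (1:ℤ) ≤ dl g (qMap n m h p') - dl g (qMap n m h p) by omega)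
        (show (0:ℤ) ≤ (m:ℤ) by positivity)
      constructor <;> nlinarith [hp.1.1, hp.1.2, hp'.1.1, hp'.1.2]
  -- recover equality of qMap
  have hrep : repC g (qMap n m h p) = repC g (qMap n m h p') :=
    congrArg Quotient.out hmk
  have hq : qMap n m h p = qMap n m h p' := by
    have e1 := dl_spec g (qMap n m h p)
    have e2 := dl_spec g (qMap n m h p')
    rw [key.2, hrep] at e1
    exact sub_left_inj.mp (e1.symm.trans e2)
  unfold qMap at hq
  rw [key.1] at hq
  have hp2 := sub_left_inj.mp hq
  exact Prod.ext key.1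
    (intCast_Icc_inj hn0 (Finset.mem_Icc.mpr hp.2) (Finset.mem_Icc.mpr hp'.2) hp2)
end Phi

set_option maxHeartbeats 2000000 in
lemma phi_step {n m c κ N : ℕ} [NeZero n] {g : ZMod n}
    {h : ℤ × ℤ → Finset (ℤ × ℤ)}
    (e : ZMod n ⧸ AddSubgroup.zmultiples g ≃ Fin c)
    (hn : 3 ≤ n) (hm : 3 ≤ m)
    (hκ : addOrderOf g = κ) (hκpos : 0 < κ)
    (hcong : (m : ZMod n) - 2 * (N : ZMod n) = g)
    (hrange : ∀ a ∈ forwardCycle m, h a = forwardCycle n ∨ h a = backwardCycle n)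
    (hcount : ((forwardCycle m).filter fun a => h a = backwardCycle n).card = N)
    {u v : ℤ × ℤ} (harc : (u, v) ∈ prodArcs (forwardCycle m) h) :
    phiMap n m c h g e v = ((phiMap n m c h g e u).1,
      if (phiMap n m c h g e u).2 = ((m * κ : ℕ) : ℤ) then 1
      else (phiMap n m c h g e u).2 + 1) := by
  have hg0 : addOrderOf g ≠ 0 := by omega
  obtain ⟨ha, hb, hi, hj, hcast⟩ := arc_props hn hrange harc
  rw [Finset.mem_Icc] at ha
  have hdl0 := dl_nonneg g (qMap n m h u) hg0
  have hdl1 := dl_lt g (qMap n m h u) hg0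
  rw [hκ] at hdl1
  by_cases hum : u.1 = (m : ℤ)
  · -- wrap-around arc: v.1 = 1, coset shifts by g
    have hb1 : v.1 = 1 := by rw [hb]; unfold nxt; rw [if_pos hum]
    have hsum : ((psum n m h ((m:ℤ) + 1) : ℤ) : ZMod n) = g := by
      rw [sum_eps n m N h hcount]; push_cast; exact hcong
    have hqv : qMap n m h v = qMap n m h u + g := by
      unfold qMap
      rw [hb1, psum_one, hcast, hum, ← hsum,
        psum_succ n m h (by exact_mod_cast Nat.one_le_iff_ne_zero.mpr (by omega))]
      push_cast
      ring
    have hmk : (QuotientAddGroup.mk (qMap n m h v) : ZMod n ⧸ AddSubgroup.zmultiples g)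
        = QuotientAddGroup.mk (qMap n m h u) := by rw [hqv]; exact mk_add_g g _
    have hdlv : dl g (qMap n m h v) = (dl g (qMap n m h u) + 1) % (κ : ℤ) := by
      rw [hqv, dl_add g _ hg0, hκ]
    unfold phiMap
    rw [Prod.ext_iff]
    dsimp only
    refine ⟨by rw [hmk], ?_⟩
    by_cases hdl : dl g (qMap n m h u) = (κ : ℤ) - 1
    · have hmod : dl g (qMap n m h v) = 0 := by
        rw [hdlv, hdl]
        simp
      rw [if_pos (by push_cast; rw [hum, hdl]; ring), hmod, hb1]
      ring
    · have hmod : dl g (qMap n m h v) = dl g (qMap n m h u) + 1 := by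
        rw [hdlv]
        exact Int.emod_eq_of_lt (by omega) (by omega)
      rw [if_neg ?_, hmod, hb1, hum]
      · ring
      · push_cast
        rw [hum]
        intro hcontra
        have : dl g (qMap n m h u) = (κ:ℤ) - 1 := by
          have hm0 : (0:ℤ) < (m:ℤ) := by exact_mod_cast (by omega : 0 < m)
          have : (m:ℤ) * dl g (qMap n m h u) = (m:ℤ) * ((κ:ℤ) - 1) := by linarith
          exact mul_left_cancel₀ (by omega) this
        exact hdl this
  · -- ordinary arc: v.1 = u.1 + 1, same coset element
    have hb1 : v.1 = u.1 + 1 := by rw [hb]; unfold nxt; rw [if_neg hum]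
    have hqv : qMap n m h v = qMap n m h u := by
      unfold qMap
      rw [hb1, psum_succ n m h ha.1, hcast]
      push_cast
      ring
    unfold phiMap
    rw [Prod.ext_iff]
    dsimp only
    refine ⟨by rw [hqv], ?_⟩
    rw [hqv, if_neg ?_, hb1]
    · ring
    · push_cast
      have hbd := mul_le_mul_of_nonneg_left (show dl g (qMap n m h u) ≤ (κ:ℤ) - 1 by omega)
        (show (0:ℤ) ≤ (m:ℤ) by positivity)
      intro hcontra
      have hu1 : u.1 ≤ (m:ℤ) - 1 := by
        rcases lt_or_eq_of_le ha.2 with hlt | heq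
        · omega
        · exact absurd heq hum
      nlinarith

lemma iso_comp {β γ δ : Type*} [DecidableEq β] [DecidableEq γ] [DecidableEq δ]
    {V1 : Finset β} {A1 : Finset (β × β)} {V2 : Finset γ} {A2 : Finset (γ × γ)}
    {V3 : Finset δ} {A3 : Finset (δ × δ)}
    (h1 : DigraphIso V1 A1 V2 A2) (h2 : DigraphIso V2 A2 V3 A3) :
    DigraphIso V1 A1 V3 A3 := by
  obtain ⟨φ, hφi, hφv, hφa⟩ := h1
  obtain ⟨ψ, hψi, hψv, hψa⟩ := h2
  have hmem : ∀ x ∈ V1, φ x ∈ V2 := fun x hx => hφv ▸ Finset.mem_image_of_mem φ hx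
  refine ⟨ψ ∘ φ, ?_, ?_, ?_⟩
  · intro x hx y hy hxy
    exact hφi hx hy (hψi (hmem x hx) (hmem y hy) hxy)
  · rw [← Finset.image_image, hφv, hψv]
  · have hcomp : Prod.map (ψ ∘ φ) (ψ ∘ φ) = Prod.map ψ ψ ∘ Prod.map φ φ := by
      funext p; cases p; rfl
    rw [hcomp, ← Finset.image_image, hφa, hψa]

lemma iso_union_one (L : ℕ) :
    DigraphIso (Finset.Icc (1:ℤ) ((1:ℕ):ℤ) ×ˢ Finset.Icc (1:ℤ) (L:ℤ)) (unionCycles 1 L)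
      (Finset.Icc (1:ℤ) (L:ℤ)) (forwardCycle L) := by
  refine ⟨Prod.snd, ?_, ?_, ?_⟩
  · intro x hx y hy hxy
    simp only [Finset.coe_product, Set.mem_prod, Finset.mem_coe, Finset.mem_Icc,
      Nat.cast_one] at hx hy
    exact Prod.ext (by omega) hxy
  · ext z
    simp only [Finset.mem_image, Finset.mem_product, Finset.mem_Icc, Nat.cast_one]
    constructor
    · rintro ⟨x, ⟨h1, h2⟩, rfl⟩; exact h2
    · intro hz; exact ⟨((1:ℤ), z), ⟨by omega, hz⟩, rfl⟩
  · unfold unionCycles forwardCycle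
    rw [Finset.image_image]
    ext z
    simp only [Finset.mem_image, Finset.mem_product, Finset.mem_Icc, Nat.cast_one,
      Function.comp]
    constructor
    · rintro ⟨x, ⟨h1, h2⟩, rfl⟩
      exact ⟨x.2, h2, rfl⟩
    · rintro ⟨i, hi, rfl⟩
      exact ⟨((1:ℤ), i), ⟨by omega, hi⟩, rfl⟩


/-- Let `g` be a generator of a cyclic subgroup of `ℤ_n` of order `κ`, and let `N < m`
satisfy `m - 2N ≡ g (mod n)`. If `h : E(C⃗_m) → {C⃗_n, C⃖_n}` assigns `C⃖_n` to exactly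
`N` arcs of `C⃗_m`, then `C⃗_m ⊗_h {C⃗_n, C⃖_n}` consists of exactly `n/κ` disjoint
copies of the strongly oriented cycle `C⃗_{mκ}`. In particular, if `gcd(g,n) = 1`, then
`C⃗_m ⊗_h {C⃗_n, C⃖_n} ≅ C⃗_{mn}`. -/
theorem stmt15 (m n : ℕ) (hm : 3 ≤ m) (hn : 3 ≤ n)
    (g : ZMod n) (κ : ℕ) (hκ : addOrderOf g = κ)
    (N : ℕ) (hN : N < m) (hcong : (m : ZMod n) - 2 * (N : ZMod n) = g)
    (h : ℤ × ℤ → Finset (ℤ × ℤ))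
    (hrange : ∀ a ∈ forwardCycle m, h a = forwardCycle n ∨ h a = backwardCycle n)
    (hcount : ((forwardCycle m).filter fun a => h a = backwardCycle n).card = N) :
    DigraphIso
      (Finset.Icc (1 : ℤ) (m : ℤ) ×ˢ Finset.Icc (1 : ℤ) (n : ℤ))
      (prodArcs (forwardCycle m) h)
      (Finset.Icc (1 : ℤ) ((n / κ : ℕ) : ℤ) ×ˢ Finset.Icc (1 : ℤ) ((m * κ : ℕ) : ℤ))
      (unionCycles (n / κ) (m * κ)) ∧
    (Nat.gcd (ZMod.val g) n = 1 →
      DigraphIso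
        (Finset.Icc (1 : ℤ) (m : ℤ) ×ˢ Finset.Icc (1 : ℤ) (n : ℤ))
        (prodArcs (forwardCycle m) h)
        (Finset.Icc (1 : ℤ) ((m * n : ℕ) : ℤ))
        (forwardCycle (m * n))) := by
  haveI : NeZero n := ⟨by omega⟩
  have hκpos : 0 < κ := hκ ▸ addOrderOf_pos g
  have hκdvd : κ ∣ n := by
    have := addOrderOf_dvd_card (x := g)
    rwa [hκ, ZMod.card] at this
  have hcardeq : n / κ * (m * κ) = m * n := by
    have hdm : n / κ * κ = n := Nat.div_mul_cancel hκdvd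
    calc n / κ * (m * κ) = m * (n / κ * κ) := by ring
    _ = m * n := by rw [hdm]
  let e := Finite.equivFinOfCardEq (card_quot g hκ)
  -- endpoints of arcs lie in the vertex set
  have hends : ∀ w ∈ prodArcs (forwardCycle m) h,
      w.1 ∈ Finset.Icc (1:ℤ) (m:ℤ) ×ˢ Finset.Icc (1:ℤ) (n:ℤ) ∧
      w.2 ∈ Finset.Icc (1:ℤ) (m:ℤ) ×ˢ Finset.Icc (1:ℤ) (n:ℤ) := by
    intro w hw
    have hw' : (w.1, w.2) ∈ prodArcs (forwardCycle m) h := by rwa [Prod.mk.eta]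
    obtain ⟨ha, hb, hi, hj, _⟩ := arc_props hn hrange hw'
    constructor
    · rw [Finset.mem_product]; exact ⟨ha, hi⟩
    · rw [Finset.mem_product]; exact ⟨hb ▸ nxt_mem ha, hj⟩
  have hinj := phi_injOn (m := m) (h := h) e hκ hκpos (show 0 < n by omega)
  have hfirst : DigraphIso
      (Finset.Icc (1 : ℤ) (m : ℤ) ×ˢ Finset.Icc (1 : ℤ) (n : ℤ))
      (prodArcs (forwardCycle m) h)
      (Finset.Icc (1 : ℤ) ((n / κ : ℕ) : ℤ) ×ˢ Finset.Icc (1 : ℤ) ((m * κ : ℕ) : ℤ))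
      (unionCycles (n / κ) (m * κ)) := by
    refine ⟨phiMap n m (n / κ) h g e, hinj, ?_, ?_⟩
    · apply Finset.eq_of_subset_of_card_le
      · intro z hz
        rw [Finset.mem_image] at hz
        obtain ⟨p, hp, rfl⟩ := hz
        exact phi_mem e hκ hκpos (by omega) hp
      · rw [Finset.card_image_of_injOn hinj]
        rw [Finset.card_product, Finset.card_product]
        simp only [Int.card_Icc, add_sub_cancel_right, Int.toNat_natCast]
        exact hcardeq.le
    · apply Finset.eq_of_subset_of_card_le
      · intro z hz
        rw [Finset.mem_image] at hz
        obtain ⟨w, hw, rfl⟩ := hz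
        have hw' : (w.1, w.2) ∈ prodArcs (forwardCycle m) h := by rwa [Prod.mk.eta]
        unfold unionCycles
        rw [Finset.mem_image]
        refine ⟨phiMap n m (n / κ) h g e w.1, ?_, ?_⟩
        · have := phi_mem (h := h) e hκ hκpos (show 0 < m by omega) (hends w hw).1
          rwa [Finset.mem_product] at this ⊢
        · have hstep := phi_step e hn hm hκ hκpos hcong hrange hcount hw'
          rw [Prod.map]
          exact Prod.ext rfl hstep.symm
      · rw [card_unionCycles, Finset.card_image_of_injOn, card_prodArcs hrange, hcardeq]
        intro w hw w' hw' heq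
        rw [Finset.mem_coe] at hw hw'
        have e1 := hinj (Finset.mem_coe.mpr (hends w hw).1)
          (Finset.mem_coe.mpr (hends w' hw').1) (congrArg Prod.fst heq)
        have e2 := hinj (Finset.mem_coe.mpr (hends w hw).2)
          (Finset.mem_coe.mpr (hends w' hw').2) (congrArg Prod.snd heq)
        exact Prod.ext e1 e2
  refine ⟨hfirst, fun hgcd => ?_⟩
  have hκn : κ = n := by
    rw [← hκ]
    have hgval : g = ((g.val : ℕ) : ZMod n) := by
      rw [ZMod.natCast_val, ZMod.cast_id]
    rw [hgval, ZMod.addOrderOf_coe _ (by omega), Nat.gcd_comm, hgcd, Nat.div_one]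
  have h1 : n / κ = 1 := by rw [hκn]; exact Nat.div_self (by omega)
  have h2 : m * κ = m * n := by rw [hκn]
  rw [h1, h2] at hfirst
  exact iso_comp hfirst (iso_union_one (m * n))
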